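/- Let A be an integral domain, E a divisible A-module, and R = A⋉E. Then every non-nilpotent ideal of R is a big ideal of R if and only if A is a big ideal domain. -/

import Mathlib

open TrivSqZeroExt

/-- An ideal `I` of a commutative ring `R` is a *big ideal* if whenever `J ⊊ I`,
`J ^ n ⊊ I ^ n` for every positive integer `n`. -/
def Ideal.IsBig {R : Type*} [CommRing R] (I : Ideal R) : Prop :=
  ∀ J : Ideal R, J < I → ∀ n : ℕ, 1 ≤ n → J ^ n < I ^ n

/-- An ideal `I` of a commutative ring `R` is an *upper big ideal* if whenever `I ⊊ J`,
`I ^ n ⊊ J ^ n` for every positive integer `n`. -/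
def Ideal.IsUpperBig {R : Type*} [CommRing R] (I : Ideal R) : Prop :=
  ∀ J : Ideal R, I < J → ∀ n : ℕ, 1 ≤ n → I ^ n < J ^ n

/-- A commutative ring is a *big ideal ring* if every ideal is a big ideal. -/
def IsBigIdealRing (R : Type*) [CommRing R] : Prop :=
  ∀ I : Ideal R, I.IsBig

variable {A : Type*} [CommRing A] {E : Type*} [AddCommGroup E] [Module A E]
  [Module Aᵐᵒᵖ E] [IsCentralScalar A E]

/-- The idealization `I ⋉ F = {(a, e) : a ∈ I, e ∈ F}` of an ideal `I` of `A` and a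
submodule `F` of `E` with `I·E ⊆ F`, as an ideal of the trivial ring extension `A ⋉ E`. -/
def Ideal.idealize (I : Ideal A) (F : Submodule A E)
    (h : ∀ a ∈ I, ∀ e : E, a • e ∈ F) : Ideal (TrivSqZeroExt A E) where
  carrier := {x | x.fst ∈ I ∧ x.snd ∈ F}
  add_mem' ha hb := ⟨I.add_mem ha.1 hb.1, F.add_mem ha.2 hb.2⟩
  zero_mem' := ⟨I.zero_mem, F.zero_mem⟩
  smul_mem' c x hx := by
    refine ⟨?_, ?_⟩
    · rw [smul_eq_mul, fst_mul]
      exact I.mul_mem_left _ hx.1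
    · rw [smul_eq_mul, snd_mul]
      refine F.add_mem (F.smul_mem _ hx.2) ?_
      rw [op_smul_eq_smul]
      exact h _ hx.1 _

/-- For an ideal `L` of `A ⋉ E`, the ideal `I_L = {a ∈ A : (a, e) ∈ L for some e ∈ E}`
of `A`. -/
def Ideal.fstProj (L : Ideal (TrivSqZeroExt A E)) : Ideal A :=
  (L.restrictScalars A).map (fstHom A A E).toLinearMap

/-- For an ideal `L` of `A ⋉ E`, the submodule `F_L = {e ∈ E : (a, e) ∈ L for some a ∈ A}`
 of `E`. -/
def Ideal.sndProj (L : Ideal (TrivSqZeroExt A E)) : Submodule A E :=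
  (L.restrictScalars A).map (sndHom A E)

/-- `I_L · E ⊆ F_L`, so that `I_L ⋉ F_L` is an ideal of `A ⋉ E`. -/
theorem Ideal.fstProj_smul_mem_sndProj (L : Ideal (TrivSqZeroExt A E)) :
    ∀ a ∈ L.fstProj, ∀ e : E, a • e ∈ L.sndProj := by
  rintro a ha e
  obtain ⟨x, hx, rfl⟩ := ha
  exact ⟨x * inr e, L.mul_mem_right _ hx, by simp⟩

section Aux

theorem Ideal.mem_fstProj {L : Ideal (TrivSqZeroExt A E)} {a : A} :
    a ∈ L.fstProj ↔ ∃ x ∈ L, fst x = a := by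
  simp [Ideal.fstProj, Submodule.mem_map]

theorem Ideal.fstProj_eq_map (L : Ideal (TrivSqZeroExt A E)) :
    L.fstProj = Ideal.map (fstHom A A E : TrivSqZeroExt A E →+* A) L := by
  apply le_antisymm
  · rintro a ha
    obtain ⟨x, hx, rfl⟩ := Ideal.mem_fstProj.mp ha
    exact Ideal.mem_map_of_mem _ hx
  · rw [Ideal.map_le_iff_le_comap]
    intro x hx
    exact Ideal.mem_fstProj.mpr ⟨x, hx, rfl⟩

theorem Ideal.mem_idealize {I : Ideal A} {F : Submodule A E} {h} {x : TrivSqZeroExt A E} :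
    x ∈ I.idealize F h ↔ x.fst ∈ I ∧ x.snd ∈ F := Iff.rfl

theorem Ideal.fstProj_idealize (I : Ideal A) (F : Submodule A E) (h) :
    (I.idealize F h).fstProj = I := by
  ext a
  rw [Ideal.mem_fstProj]
  constructor
  · rintro ⟨x, hx, rfl⟩
    exact hx.1
  · intro ha
    exact ⟨inl a, ⟨by simpa using ha, by simp⟩, by simp⟩

theorem Ideal.idealize_congr {I J : Ideal A} (hIJ : I = J) {F : Submodule A E} {h h'} :
    I.idealize F h = J.idealize F h' := by subst hIJ; rfl

theorem Ideal.idealize_top_le_iff {I J : Ideal A} {h h'} :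
    I.idealize (⊤ : Submodule A E) h ≤ J.idealize ⊤ h' ↔ I ≤ J := by
  constructor
  · intro hle a ha
    have := hle (show (inl a : TrivSqZeroExt A E) ∈ I.idealize ⊤ h from
      ⟨by simpa using ha, trivial⟩)
    simpa using this.1
  · intro hle x hx
    exact ⟨hle hx.1, trivial⟩

theorem Ideal.idealize_top_lt_iff {I J : Ideal A} {h h'} :
    I.idealize (⊤ : Submodule A E) h < J.idealize ⊤ h' ↔ I < J := by
  rw [lt_iff_le_not_ge, lt_iff_le_not_ge, Ideal.idealize_top_le_iff, Ideal.idealize_top_le_iff]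

theorem Ideal.idealize_top_ne_bot {I : Ideal A} (hI : I ≠ ⊥) {h} :
    I.idealize (⊤ : Submodule A E) h ≠ ⊥ := by
  obtain ⟨a, haI, ha⟩ := Submodule.exists_mem_ne_zero_of_ne_bot hI
  intro h0
  have : (inl a : TrivSqZeroExt A E) ∈ I.idealize (⊤ : Submodule A E) h :=
    ⟨by simpa using haI, trivial⟩
  rw [h0, Ideal.mem_bot] at this
  exact ha (by simpa using congrArg fst this)

theorem Ideal.inr_mem_of_fstProj_ne_bot
    (hdiv : ∀ a : A, a ≠ 0 → ∀ e : E, ∃ f : E, a • f = e)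
    {L : Ideal (TrivSqZeroExt A E)} (hL : L.fstProj ≠ ⊥) (e : E) :
    (inr e : TrivSqZeroExt A E) ∈ L := by
  obtain ⟨b, hbL, hb⟩ := Submodule.exists_mem_ne_zero_of_ne_bot hL
  obtain ⟨x, hx, rfl⟩ := Ideal.mem_fstProj.mp hbL
  obtain ⟨f, hf⟩ := hdiv _ hb e
  have : x * inr f = inr e := by
    apply TrivSqZeroExt.ext <;> simp [hf]
  rw [← this]
  exact L.mul_mem_right _ hx

theorem Ideal.eq_idealize_of_fstProj_ne_bot
    (hdiv : ∀ a : A, a ≠ 0 → ∀ e : E, ∃ f : E, a • f = e)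
    {L : Ideal (TrivSqZeroExt A E)} (hL : L.fstProj ≠ ⊥) :
    L = L.fstProj.idealize ⊤ (fun _ _ _ => Submodule.mem_top) := by
  ext x
  constructor
  · intro hx
    exact ⟨Ideal.mem_fstProj.mpr ⟨x, hx, rfl⟩, trivial⟩
  · rintro ⟨hx1, -⟩
    obtain ⟨y, hy, hyx⟩ := Ideal.mem_fstProj.mp hx1
    have hxy : x = y + inr (x.snd - y.snd) := by
      apply TrivSqZeroExt.ext <;> simp [hyx]
    rw [hxy]
    exact L.add_mem hy (Ideal.inr_mem_of_fstProj_ne_bot hdiv hL _)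

theorem Ideal.sq_eq_bot_of_fstProj_eq_bot {M : Ideal (TrivSqZeroExt A E)}
    (hM : M.fstProj = ⊥) : M * M = ⊥ := by
  rw [eq_bot_iff, Ideal.mul_le]
  intro x hx y hy
  have hx0 : x.fst = 0 := by
    have : x.fst ∈ M.fstProj := Ideal.mem_fstProj.mpr ⟨x, hx, rfl⟩
    rwa [hM, Ideal.mem_bot] at this
  have hy0 : y.fst = 0 := by
    have : y.fst ∈ M.fstProj := Ideal.mem_fstProj.mpr ⟨y, hy, rfl⟩
    rwa [hM, Ideal.mem_bot] at this
  have : x * y = 0 := by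
    apply TrivSqZeroExt.ext <;> simp [hx0, hy0]
  simp [this]

theorem Ideal.pow_ne_bot_of_ne_bot [IsDomain A] {I : Ideal A} (hI : I ≠ ⊥) (n : ℕ) :
    I ^ n ≠ ⊥ := by
  obtain ⟨a, haI, ha⟩ := Submodule.exists_mem_ne_zero_of_ne_bot hI
  intro h0
  have : a ^ n ∈ I ^ n := Ideal.pow_mem_pow haI n
  rw [h0, Ideal.mem_bot] at this
  exact pow_ne_zero n ha this

theorem Ideal.idealize_top_pow [IsDomain A]
    (hdiv : ∀ a : A, a ≠ 0 → ∀ e : E, ∃ f : E, a • f = e)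
    {I : Ideal A} (hI : I ≠ ⊥) {h} (n : ℕ) :
    (I.idealize (⊤ : Submodule A E) h) ^ n = (I ^ n).idealize ⊤ (fun _ _ _ => trivial) := by
  have h1 : ((I.idealize (⊤ : Submodule A E) h) ^ n).fstProj = I ^ n := by
    rw [Ideal.fstProj_eq_map, Ideal.map_pow, ← Ideal.fstProj_eq_map, Ideal.fstProj_idealize]
  have h2 : ((I.idealize (⊤ : Submodule A E) h) ^ n).fstProj ≠ ⊥ := by
    rw [h1]; exact Ideal.pow_ne_bot_of_ne_bot hI n
  rw [Ideal.eq_idealize_of_fstProj_ne_bot hdiv h2]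
  exact Ideal.idealize_congr h1

end Aux
/-- **Theorem 4.2(2).**  Let `A` be an integral domain, `E` a divisible `A`-module and
`R = A ⋉ E`.  Then every non-nilpotent ideal of `R` is a big ideal if and only if
`A` is a big ideal domain. -/
theorem forall_nonNilpotent_isBig_iff_isBigIdealRing [IsDomain A]
    (hdiv : ∀ a : A, a ≠ 0 → ∀ e : E, ∃ f : E, a • f = e) :
    (∀ L : Ideal (TrivSqZeroExt A E), (∀ n : ℕ, 1 ≤ n → L ^ n ≠ ⊥) → L.IsBig) ↔
      IsBigIdealRing A := by
  constructor
  · intro H I J hJI n hn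
    have hI : I ≠ ⊥ := fun h => (not_lt_bot (h ▸ hJI))
    have hLnn : ∀ m : ℕ, 1 ≤ m →
        (I.idealize (⊤ : Submodule A E) (fun _ _ _ => Submodule.mem_top)) ^ m ≠ ⊥ := by
      intro m _
      rw [Ideal.idealize_top_pow hdiv hI m]
      exact Ideal.idealize_top_ne_bot (Ideal.pow_ne_bot_of_ne_bot hI m)
    have hbig := H _ hLnn
    have hMlt : J.idealize (⊤ : Submodule A E) (fun _ _ _ => Submodule.mem_top) <
        I.idealize ⊤ (fun _ _ _ => Submodule.mem_top) := Ideal.idealize_top_lt_iff.mpr hJI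
    have hlt := hbig _ hMlt n hn
    by_cases hJ : J = ⊥
    · subst hJ
      rw [← Ideal.zero_eq_bot, zero_pow (by omega : n ≠ 0), Ideal.zero_eq_bot]
      exact bot_lt_iff_ne_bot.mpr (Ideal.pow_ne_bot_of_ne_bot hI n)
    · rw [Ideal.idealize_top_pow hdiv hJ n, Ideal.idealize_top_pow hdiv hI n] at hlt
      exact Ideal.idealize_top_lt_iff.mp hlt
  · intro H L hLnn M hML n hn
    have hfst : L.fstProj ≠ ⊥ := by
      intro h0
      exact hLnn 2 (by norm_num) (by rw [pow_two]; exact Ideal.sq_eq_bot_of_fstProj_eq_bot h0)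
    have hLeq := Ideal.eq_idealize_of_fstProj_ne_bot hdiv hfst
    by_cases hMf : M.fstProj = ⊥
    · rcases Nat.lt_or_ge n 2 with h2 | h2
      · have hne : n = 1 := by omega
        subst hne
        simpa [pow_one] using hML
      · have hMn : M ^ n = ⊥ := by
          have hle : M ^ n ≤ M ^ 2 := Ideal.pow_le_pow_right h2
          rw [pow_two, Ideal.sq_eq_bot_of_fstProj_eq_bot hMf] at hle
          exact le_bot_iff.mp hle
        rw [hMn]
        refine bot_lt_iff_ne_bot.mpr ?_
        rw [hLeq, Ideal.idealize_top_pow hdiv hfst n]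
        exact Ideal.idealize_top_ne_bot (Ideal.pow_ne_bot_of_ne_bot hfst n)
    · have hMeq := Ideal.eq_idealize_of_fstProj_ne_bot hdiv hMf
      have hJI : M.fstProj < L.fstProj := by
        rw [hMeq, hLeq] at hML
        exact Ideal.idealize_top_lt_iff.mp hML
      have hlt := H L.fstProj M.fstProj hJI n hn
      rw [hMeq, hLeq, Ideal.idealize_top_pow hdiv hMf n, Ideal.idealize_top_pow hdiv hfst n]
      exact Ideal.idealize_top_lt_iff.mpr hlt
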